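/- arXiv:1410.0466 — 3 statements merged into one kernel-verified Lean document; each statement's English description precedes it below -/
import Mathlib

section
/- Let p, q be coprime positive integers with p < q and 2q ≤ 3p, and let a, d be positive integers satisfying pq ≥ (3pq - p² - q²)·a·d. Then a·d ≤ 2. -/
/-- Let `p, q` be coprime positive integers with `p < q` and `2q ≤ 3p`, and let `a, d`
be positive integers satisfying `pq ≥ (3pq - p² - q²)·a·d`.  Then `a·d ≤ 2`. -/
theorem kronecker_three_ad_bound (p q a d : ℕ) (hp : 0 < p) (hq : 0 < q)
    (hcop : Nat.Coprime p q) (hpq : p < q) (h : 2 * q ≤ 3 * p)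
    (ha : 0 < a) (hd : 0 < d)
    (hineq : (3 * (p : ℤ) * q - (p : ℤ) ^ 2 - (q : ℤ) ^ 2) * a * d ≤ (p : ℤ) * q) :
    a * d ≤ 2 := by
  by_contra hc
  push_neg at hc
  have h3 : (3 : ℤ) ≤ (a : ℤ) * d := by exact_mod_cast hc
  have hp' : (0 : ℤ) < p := by exact_mod_cast hp
  have hq' : (0 : ℤ) < q := by exact_mod_cast hq
  have hpq' : (p : ℤ) < q := by exact_mod_cast hpq
  have h' : 2 * (q : ℤ) ≤ 3 * p := by exact_mod_cast h
  have hD : (0 : ℤ) < 3 * (p : ℤ) * q - (p : ℤ) ^ 2 - (q : ℤ) ^ 2 := by nlinarith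
  have hkey : (p : ℤ) * q < 3 * (3 * (p : ℤ) * q - (p : ℤ) ^ 2 - (q : ℤ) ^ 2) := by
    nlinarith [mul_nonneg (sub_nonneg.2 hpq'.le) (sub_nonneg.2 h'), mul_pos hq' (by linarith : (0:ℤ) < 3 * p - q)]
  nlinarith [mul_le_mul_of_nonneg_left h3 hD.le]
end

section
/- There is no pair of positive coprime integers (p, q) with p < q, 2q ≤ 3p, such that for some n ∈ {1, 2} and (a, d) ∈ {(1,1), (1,2), (2,1)} the equations pd + qa ≥ npq and nap + ndq = a² + d² + 3ad - 1 hold simultaneously. -/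
/-- There is no pair of positive coprime integers `(p, q)` with `p < q`, `2q ≤ 3p`, such
that for some `n ∈ {1, 2}` and `(a, d) ∈ {(1,1), (1,2), (2,1)}` the conditions
`pd + qa ≥ npq` and `nap + ndq = a² + d² + 3ad - 1` hold simultaneously. -/
theorem no_exceptional_case :
    ¬ ∃ p q n a d : ℤ, 0 < p ∧ 0 < q ∧ IsCoprime p q ∧ p < q ∧ 2 * q ≤ 3 * p ∧
      (n = 1 ∨ n = 2) ∧
      ((a = 1 ∧ d = 1) ∨ (a = 1 ∧ d = 2) ∨ (a = 2 ∧ d = 1)) ∧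
      n * p * q ≤ p * d + q * a ∧
      n * a * p + n * d * q = a ^ 2 + d ^ 2 + 3 * a * d - 1 := by
  rintro ⟨p, q, n, a, d, hp, hq, hco, hpq, h32, hn, had, h1, h2⟩
  clear hco
  rcases hn with rfl | rfl <;>
    rcases had with ⟨rfl, rfl⟩ | ⟨rfl, rfl⟩ | ⟨rfl, rfl⟩
  · clear h1; omega
  · clear h1; omega
  · have hp3 : p = 3 := by omega
    have hq4 : q = 4 := by omega
    subst hp3; subst hq4; omega
  · clear h1; omega
  · clear h1; omega
  · clear h1; omega
end

section
/- Every finite-dimensional representation V of a finite quiver Q admits a unique Harder–Narasimhan filtration: a chain 0 = V₀ ⊂ V₁ ⊂ … ⊂ Vₛ = V of subrepresentations such that each subquotient V_k/V_{k-1} is semistable and μ(V₁/V₀) > μ(V₂/V₁) > … > μ(Vₛ/V_{s-1}). -/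
open Module

/-- A finite-dimensional representation of a quiver with vertex set `Q0`,
arrow set `Q1`, source map `s` and target map `t`, over a field `k`. -/
structure QRep (k : Type*) [Field k] (Q0 Q1 : Type*) (s t : Q1 → Q0) where
  carrier : Q0 → Type*
  [acg : ∀ i, AddCommGroup (carrier i)]
  [mod : ∀ i, Module k (carrier i)]
  [fd : ∀ i, FiniteDimensional k (carrier i)]
  map : ∀ a, carrier (s a) →ₗ[k] carrier (t a)

attribute [instance] QRep.acg QRep.mod QRep.fd

variable {k : Type*} [Field k] {Q0 Q1 : Type*} (s t : Q1 → Q0)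

/-- A family of submodules `U i ⊆ V i` is a subrepresentation if it is stable
under all the arrow maps. -/
def QRep.IsSubrep (V : QRep k Q0 Q1 s t) (U : ∀ i, Submodule k (V.carrier i)) : Prop :=
  ∀ a, ∀ x ∈ U (s a), V.map a x ∈ U (t a)

variable [Fintype Q0]

/-- The slope (with respect to the stability `Θ`) of the subquotient `B/A` of two nested
subrepresentations `A ≤ B`, computed from the dimension vector
`(dim Bᵢ - dim Aᵢ)ᵢ` of the subquotient. -/
noncomputable def qSlope (Θ : Q0 → ℚ) (V : QRep k Q0 Q1 s t)
    (A B : ∀ i, Submodule k (V.carrier i)) : ℚ :=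
  (∑ i, Θ i * ((finrank k (B i) : ℚ) - (finrank k (A i) : ℚ))) /
    (∑ i, ((finrank k (B i) : ℚ) - (finrank k (A i) : ℚ)))

/-- `F` (together with the length `n`) is a Harder–Narasimhan filtration of `V`:
a chain `0 = F 0 ⊂ F 1 ⊂ … ⊂ F n = V` of subrepresentations (constant equal to `V`
from index `n` onwards) such that each subquotient `F (j+1) / F j` is semistable
(every intermediate subrepresentation `F j ≤ U ≤ F (j+1)` satisfies
`μ(U/F j) ≤ μ(F (j+1)/F j)`, via the correspondence between subrepresentations of the
subquotient and intermediate subrepresentations), with strictly decreasing slopes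
`μ(F 1/F 0) > μ(F 2/F 1) > … > μ(F n/F (n-1))`. -/
def IsHNFiltration (Θ : Q0 → ℚ) (V : QRep k Q0 Q1 s t)
    (n : ℕ) (F : ℕ → ∀ i, Submodule k (V.carrier i)) : Prop :=
  (F 0 = fun _ => ⊥) ∧
  (∀ j, n ≤ j → F j = fun _ => ⊤) ∧
  (∀ j, V.IsSubrep s t (F j)) ∧
  (∀ j < n, (∀ i, F j i ≤ F (j + 1) i) ∧ F j ≠ F (j + 1)) ∧
  (∀ j < n, ∀ U : ∀ i, Submodule k (V.carrier i), V.IsSubrep s t U →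
      (∀ i, F j i ≤ U i) → (∀ i, U i ≤ F (j + 1) i) → U ≠ F j →
      qSlope s t Θ V (F j) U ≤ qSlope s t Θ V (F j) (F (j + 1))) ∧
  (∀ j, j + 1 < n →
      qSlope s t Θ V (F (j + 1)) (F (j + 2)) < qSlope s t Θ V (F j) (F (j + 1)))

set_option linter.unusedSectionVars false
namespace HNAux

open Module Classical

variable {k : Type*} [Field k] {Q0 Q1 : Type*} {s t : Q1 → Q0} [Fintype Q0]
variable (Θ : Q0 → ℚ) (V : QRep k Q0 Q1 s t)

noncomputable def rkN (A : ∀ i, Submodule k (V.carrier i)) : ℕ := ∑ i, finrank k (A i)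

noncomputable def rk (A : ∀ i, Submodule k (V.carrier i)) : ℚ := (rkN V A : ℚ)

noncomputable def dg (A : ∀ i, Submodule k (V.carrier i)) : ℚ :=
  ∑ i, Θ i * (finrank k (A i) : ℚ)

noncomputable def mu (A B : ∀ i, Submodule k (V.carrier i)) : ℚ :=
  (dg Θ V B - dg Θ V A) / (rk V B - rk V A)

variable {V}

lemma rk_eq (A : ∀ i, Submodule k (V.carrier i)) :
    rk V A = ∑ i, (finrank k (A i) : ℚ) := by
  simp [rk, rkN]

lemma qSlope_eq (A B : ∀ i, Submodule k (V.carrier i)) :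
    qSlope s t Θ V A B = mu Θ V A B := by
  unfold qSlope mu dg
  rw [rk_eq, rk_eq, ← Finset.sum_sub_distrib, ← Finset.sum_sub_distrib]
  congr 1
  exact Finset.sum_congr rfl fun i _ => by ring

lemma rkN_mono {A B : ∀ i, Submodule k (V.carrier i)} (h : A ≤ B) : rkN V A ≤ rkN V B :=
  Finset.sum_le_sum fun i _ => Submodule.finrank_mono (h i)

lemma rkN_strict {A B : ∀ i, Submodule k (V.carrier i)} (h : A ≤ B) (hne : A ≠ B) :
    rkN V A < rkN V B := by
  obtain ⟨i, hi⟩ : ∃ i, A i ≠ B i := by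
    by_contra hco; push_neg at hco; exact hne (funext hco)
  exact Finset.sum_lt_sum (fun i _ => Submodule.finrank_mono (h i))
    ⟨i, Finset.mem_univ i, Submodule.finrank_lt_finrank_of_lt (lt_of_le_of_ne (h i) hi)⟩

lemma eq_of_le_of_rkN_le {A B : ∀ i, Submodule k (V.carrier i)} (h : A ≤ B)
    (hr : rkN V B ≤ rkN V A) : A = B := by
  by_contra hne; exact absurd hr (not_le.mpr (rkN_strict h hne))

lemma rk_lt {A B : ∀ i, Submodule k (V.carrier i)} (h : A ≤ B) (hne : A ≠ B) :
    rk V A < rk V B := by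
  unfold rk; exact_mod_cast rkN_strict h hne

lemma rk_sub_pos {A B : ∀ i, Submodule k (V.carrier i)} (h : A ≤ B) (hne : A ≠ B) :
    0 < rk V B - rk V A := sub_pos.mpr (rk_lt h hne)

lemma rk_modular (A B : ∀ i, Submodule k (V.carrier i)) :
    rk V (A ⊔ B) + rk V (A ⊓ B) = rk V A + rk V B := by
  rw [rk_eq, rk_eq, rk_eq, rk_eq, ← Finset.sum_add_distrib, ← Finset.sum_add_distrib]
  refine Finset.sum_congr rfl fun i _ => ?_
  have := Submodule.finrank_sup_add_finrank_inf_eq (A i) (B i)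
  simp only [Pi.sup_apply, Pi.inf_apply]
  exact_mod_cast this

lemma dg_modular (A B : ∀ i, Submodule k (V.carrier i)) :
    dg Θ V (A ⊔ B) + dg Θ V (A ⊓ B) = dg Θ V A + dg Θ V B := by
  unfold dg
  rw [← Finset.sum_add_distrib, ← Finset.sum_add_distrib]
  refine Finset.sum_congr rfl fun i _ => ?_
  have := Submodule.finrank_sup_add_finrank_inf_eq (A i) (B i)
  simp only [Pi.sup_apply, Pi.inf_apply]
  have h2 : ((finrank k ↥(A i ⊔ B i)) : ℚ) + (finrank k ↥(A i ⊓ B i) : ℚ)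
      = (finrank k ↥(A i) : ℚ) + (finrank k ↥(B i) : ℚ) := by exact_mod_cast this
  rw [← mul_add, ← mul_add, h2]

lemma isSubrep_sup {A B : ∀ i, Submodule k (V.carrier i)} (hA : V.IsSubrep s t A)
    (hB : V.IsSubrep s t B) : V.IsSubrep s t (A ⊔ B) := by
  intro a x hx
  have hx' : x ∈ A (s a) ⊔ B (s a) := hx
  rw [Submodule.mem_sup] at hx'
  obtain ⟨y, hy, z, hz, rfl⟩ := hx'
  have : V.map a (y + z) ∈ A (t a) ⊔ B (t a) := by
    rw [Submodule.mem_sup]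
    exact ⟨V.map a y, hA a y hy, V.map a z, hB a z hz, (map_add _ _ _).symm⟩
  exact this

lemma isSubrep_inf {A B : ∀ i, Submodule k (V.carrier i)} (hA : V.IsSubrep s t A)
    (hB : V.IsSubrep s t B) : V.IsSubrep s t (A ⊓ B) :=
  fun a x hx => ⟨hA a x hx.1, hB a x hx.2⟩

lemma isSubrep_top : V.IsSubrep s t (fun _ => ⊤) := fun _ _ _ => trivial

lemma isSubrep_bot : V.IsSubrep s t (fun _ => ⊥) := by
  intro a x hx
  simp only [Submodule.mem_bot] at hx ⊢
  rw [hx, map_zero]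

lemma top_eq : (⊤ : ∀ i, Submodule k (V.carrier i)) = fun _ => ⊤ := rfl

end HNAux

namespace HNAux

open Module

variable {k : Type*} [Field k] {Q0 Q1 : Type*} {s t : Q1 → Q0} [Fintype Q0]
variable (Θ : Q0 → ℚ) {V : QRep k Q0 Q1 s t}

lemma mu_le_iff {A B : ∀ i, Submodule k (V.carrier i)} (h : A ≤ B) (hne : A ≠ B) {c : ℚ} :
    mu Θ V A B ≤ c ↔ dg Θ V B - dg Θ V A ≤ c * (rk V B - rk V A) :=
  div_le_iff₀ (rk_sub_pos h hne)

lemma le_mu_iff {A B : ∀ i, Submodule k (V.carrier i)} (h : A ≤ B) (hne : A ≠ B) {c : ℚ} :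
    c ≤ mu Θ V A B ↔ c * (rk V B - rk V A) ≤ dg Θ V B - dg Θ V A :=
  le_div_iff₀ (rk_sub_pos h hne)

lemma mu_lt_iff {A B : ∀ i, Submodule k (V.carrier i)} (h : A ≤ B) (hne : A ≠ B) {c : ℚ} :
    mu Θ V A B < c ↔ dg Θ V B - dg Θ V A < c * (rk V B - rk V A) :=
  div_lt_iff₀ (rk_sub_pos h hne)

lemma mu_spec {A B : ∀ i, Submodule k (V.carrier i)} (h : A ≤ B) (hne : A ≠ B) :
    dg Θ V B - dg Θ V A = mu Θ V A B * (rk V B - rk V A) :=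
  (div_mul_cancel₀ _ (ne_of_gt (rk_sub_pos h hne))).symm

lemma mu_eq_of_eq {A B : ∀ i, Submodule k (V.carrier i)} (h : A ≤ B) (hne : A ≠ B) {c : ℚ}
    (hd : dg Θ V B - dg Θ V A = c * (rk V B - rk V A)) : mu Θ V A B = c := by
  rw [mu, hd, mul_div_assoc, div_self (ne_of_gt (rk_sub_pos h hne)), mul_one]

/-- The set of slopes of nonzero subquotients is finite. -/
lemma slopes_finite (A : ∀ i, Submodule k (V.carrier i)) :
    {q : ℚ | ∃ U, V.IsSubrep s t U ∧ A ≤ U ∧ A ≠ U ∧ mu Θ V A U = q}.Finite := by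
  apply Set.Finite.subset (Set.finite_range
    (fun d : (∀ i, Fin (finrank k (V.carrier i) + 1)) =>
      (∑ i, Θ i * ((d i : ℕ) : ℚ)) / (∑ i, (((d i : ℕ)) : ℚ))))
  rintro q ⟨U, _, hle, hne, rfl⟩
  refine ⟨fun i => ⟨finrank k (U i) - finrank k (A i), ?_⟩, ?_⟩
  · exact Nat.lt_succ_of_le (le_trans (Nat.sub_le _ _) (Submodule.finrank_le (U i)))
  · have hcast : ∀ i, ((finrank k (U i) - finrank k (A i) : ℕ) : ℚ)
        = (finrank k (U i) : ℚ) - (finrank k (A i) : ℚ) := fun i =>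
      Nat.cast_sub (Submodule.finrank_mono (hle i))
    simp only [hcast]
    rw [mu, dg, dg, rk_eq, rk_eq, ← Finset.sum_sub_distrib, ← Finset.sum_sub_distrib]
    congr 1
    exact Finset.sum_congr rfl fun i _ => by ring

/-- Existence of the maximal destabilizing subrepresentation above `A`. -/
lemma exists_mu_max {A : ∀ i, Submodule k (V.carrier i)} (hA : V.IsSubrep s t A)
    (hAtop : A ≠ (fun _ => ⊤)) :
    ∃ U, V.IsSubrep s t U ∧ A ≤ U ∧ A ≠ U ∧
      (∀ W, V.IsSubrep s t W → A ≤ W → A ≠ W → mu Θ V A W ≤ mu Θ V A U) ∧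
      (∀ W, V.IsSubrep s t W → A ≤ W → A ≠ W → mu Θ V A U ≤ mu Θ V A W → W ≤ U) := by
  classical
  set S : Set ℚ := {q : ℚ | ∃ U, V.IsSubrep s t U ∧ A ≤ U ∧ A ≠ U ∧ mu Θ V A U = q} with hSdef
  have hS : S.Finite := slopes_finite Θ A
  have hSne : S.Nonempty :=
    ⟨mu Θ V A (fun _ => ⊤), (fun _ => ⊤), isSubrep_top, fun i => le_top, hAtop, rfl⟩
  set m : ℚ := hS.toFinset.max' (by rwa [Set.Finite.toFinset_nonempty]) with hmdef
  have hm_mem : m ∈ S := by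
    have := hS.toFinset.max'_mem (by rwa [Set.Finite.toFinset_nonempty])
    rwa [Set.Finite.mem_toFinset] at this
  have hm_max : ∀ q ∈ S, q ≤ m := fun q hq =>
    Finset.le_max' _ q (hS.mem_toFinset.mpr hq)
  -- maximize the rank among subreps of slope m
  set R : Set ℕ := {r : ℕ | ∃ U, V.IsSubrep s t U ∧ A ≤ U ∧ A ≠ U ∧ mu Θ V A U = m ∧
    rkN V U = r} with hRdef
  have hR : R.Finite := Set.Finite.subset (Set.finite_Iic (rkN V (fun _ => ⊤)))
    (by rintro r ⟨U, _, _, _, _, rfl⟩; exact rkN_mono (fun i => le_top))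
  have hRne : R.Nonempty := by
    obtain ⟨U, h1, h2, h3, h4⟩ := hm_mem
    exact ⟨rkN V U, U, h1, h2, h3, h4, rfl⟩
  have hr_mem : hR.toFinset.max' (by rwa [Set.Finite.toFinset_nonempty]) ∈ R := by
    have := hR.toFinset.max'_mem (by rwa [Set.Finite.toFinset_nonempty])
    rwa [Set.Finite.mem_toFinset] at this
  have hr_max : ∀ r ∈ R, r ≤ hR.toFinset.max' (by rwa [Set.Finite.toFinset_nonempty]) :=
    fun r hr => Finset.le_max' _ r (hR.mem_toFinset.mpr hr)
  obtain ⟨U, hUs, hUle, hUne, hUmu, hUrk⟩ := hr_mem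
  have hmax : ∀ W, V.IsSubrep s t W → A ≤ W → A ≠ W → mu Θ V A W ≤ mu Θ V A U := by
    intro W h1 h2 h3
    rw [hUmu]; exact hm_max _ ⟨W, h1, h2, h3, rfl⟩
  refine ⟨U, hUs, hUle, hUne, hmax, ?_⟩
  intro W hWs hWle hWne hWmu
  have hWm : mu Θ V A W = m :=
    le_antisymm (hm_max _ ⟨W, hWs, hWle, hWne, rfl⟩) (by rw [← hUmu]; exact hWmu)
  -- consider Z = W ⊔ U
  set Z := W ⊔ U with hZdef
  have hZs : V.IsSubrep s t Z := isSubrep_sup hWs hUs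
  have hUZ : U ≤ Z := le_sup_right
  have hZle : A ≤ Z := le_trans hUle hUZ
  have hZne : A ≠ Z := fun hAZ => hUne (le_antisymm hUle (hAZ ▸ hUZ))
  -- lower bound for the degree of Z
  have hdW : dg Θ V W - dg Θ V A = m * (rk V W - rk V A) := by
    rw [← hWm]; exact mu_spec Θ hWle hWne
  have hdU : dg Θ V U - dg Θ V A = m * (rk V U - rk V A) := by
    rw [← hUmu]; exact mu_spec Θ hUle hUne
  have hdI : dg Θ V (W ⊓ U) - dg Θ V A ≤ m * (rk V (W ⊓ U) - rk V A) := by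
    by_cases hAI : A = W ⊓ U
    · rw [← hAI]; simp
    · have hle' : A ≤ W ⊓ U := le_inf hWle hUle
      have := hmax (W ⊓ U) (isSubrep_inf hWs hUs) hle' hAI
      rw [hUmu] at this
      exact (mu_le_iff Θ hle' hAI).mp this
  have hmod_d := dg_modular Θ W U
  have hmod_r := rk_modular (V := V) W U
  have hupper : dg Θ V Z - dg Θ V A ≤ m * (rk V Z - rk V A) := by
    have := hmax Z hZs hZle hZne
    rw [hUmu] at this
    exact (mu_le_iff Θ hZle hZne).mp this
  rw [← hZdef] at hmod_d hmod_r
  have hrkid : m * (rk V Z - rk V A) = m * (rk V W - rk V A) + m * (rk V U - rk V A)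
      - m * (rk V (W ⊓ U) - rk V A) := by
    have : rk V Z - rk V A = (rk V W - rk V A) + (rk V U - rk V A)
        - (rk V (W ⊓ U) - rk V A) := by linarith
    rw [this]; ring
  have hZd : dg Θ V Z - dg Θ V A = m * (rk V Z - rk V A) := by linarith
  have hZmu : mu Θ V A Z = m := mu_eq_of_eq Θ hZle hZne hZd
  have hZR : rkN V Z ∈ R := ⟨Z, hZs, hZle, hZne, hZmu, rfl⟩
  have : rkN V Z ≤ rkN V U := hUrk ▸ hr_max _ hZR
  have hUZeq : U = Z := eq_of_le_of_rkN_le hUZ this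
  calc W ≤ Z := le_sup_left
    _ = U := hUZeq.symm

end HNAux

namespace HNAux

open Module

variable {k : Type*} [Field k] {Q0 Q1 : Type*} {s t : Q1 → Q0} [Fintype Q0]
variable (Θ : Q0 → ℚ) (V : QRep k Q0 Q1 s t)

open Classical in
noncomputable def step (A : ∀ i, Submodule k (V.carrier i)) : ∀ i, Submodule k (V.carrier i) :=
  if h : V.IsSubrep s t A ∧ A ≠ (fun _ => ⊤) then
    Classical.choose (exists_mu_max Θ h.1 h.2)
  else fun _ => ⊤

variable {V}

lemma step_spec {A : ∀ i, Submodule k (V.carrier i)} (hA : V.IsSubrep s t A)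
    (hAtop : A ≠ (fun _ => ⊤)) :
    V.IsSubrep s t (step Θ V A) ∧ A ≤ step Θ V A ∧ A ≠ step Θ V A ∧
      (∀ W, V.IsSubrep s t W → A ≤ W → A ≠ W → mu Θ V A W ≤ mu Θ V A (step Θ V A)) ∧
      (∀ W, V.IsSubrep s t W → A ≤ W → A ≠ W → mu Θ V A (step Θ V A) ≤ mu Θ V A W →
        W ≤ step Θ V A) := by
  rw [step, dif_pos ⟨hA, hAtop⟩]
  exact Classical.choose_spec (exists_mu_max Θ hA hAtop)

/-- Strict slope drop above the maximal destabilizer. -/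
lemma step_strict {A : ∀ i, Submodule k (V.carrier i)} (hA : V.IsSubrep s t A)
    (hAtop : A ≠ (fun _ => ⊤)) {W : ∀ i, Submodule k (V.carrier i)} (hWs : V.IsSubrep s t W)
    (hle : step Θ V A ≤ W) (hne : step Θ V A ≠ W) :
    mu Θ V (step Θ V A) W < mu Θ V A (step Θ V A) := by
  obtain ⟨hUs, hUle, hUne, hmax, heq⟩ := step_spec Θ hA hAtop
  set U := step Θ V A with hUdef
  by_contra hcon
  push_neg at hcon
  set m := mu Θ V A U with hmdef
  have h1 : m * (rk V W - rk V U) ≤ dg Θ V W - dg Θ V U := (le_mu_iff Θ hle hne).mp hcon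
  have h2 : dg Θ V U - dg Θ V A = m * (rk V U - rk V A) := mu_spec Θ hUle hUne
  have hAW : A ≤ W := le_trans hUle hle
  have hAWne : A ≠ W := by
    intro h
    exact absurd (le_antisymm hle (h ▸ hUle)) hne
  have h3 : m * (rk V W - rk V A) ≤ dg Θ V W - dg Θ V A := by
    have : m * (rk V W - rk V A) = m * (rk V W - rk V U) + m * (rk V U - rk V A) := by ring
    linarith
  have h4 : m ≤ mu Θ V A W := (le_mu_iff Θ hAW hAWne).mpr h3
  have h5 : W ≤ U := heq W hWs hAW hAWne h4
  exact hne (le_antisymm hle h5)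

variable (V)

open Classical in
noncomputable def hnF : ℕ → ∀ i, Submodule k (V.carrier i)
  | 0 => fun _ => ⊥
  | j + 1 => if hnF j = (fun _ => ⊤) then (fun _ => ⊤) else step Θ V (hnF j)

variable {V}

lemma hnF_subrep : ∀ j, V.IsSubrep s t (hnF Θ V j) := by
  intro j
  induction j with
  | zero => exact isSubrep_bot
  | succ j ih =>
    rw [hnF]
    split
    · exact isSubrep_top
    · exact (step_spec Θ ih (by assumption)).1

lemma hnF_succ_top {j : ℕ} (h : hnF Θ V j = (fun _ => ⊤)) :
    hnF Θ V (j + 1) = (fun _ => ⊤) := by rw [hnF, if_pos h]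

lemma hnF_succ_of_ne {j : ℕ} (h : hnF Θ V j ≠ (fun _ => ⊤)) :
    hnF Θ V (j + 1) = step Θ V (hnF Θ V j) := by rw [hnF, if_neg h]

lemma hnF_lt_succ {j : ℕ} (h : hnF Θ V j ≠ (fun _ => ⊤)) :
    hnF Θ V j ≤ hnF Θ V (j + 1) ∧ hnF Θ V j ≠ hnF Θ V (j + 1) := by
  rw [hnF_succ_of_ne Θ h]
  obtain ⟨_, h1, h2, _, _⟩ := step_spec Θ (hnF_subrep Θ j) h
  exact ⟨h1, h2⟩

lemma hnF_exists_top : ∃ j, hnF Θ V j = (fun _ => ⊤) := by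
  have key : ∀ j, hnF Θ V j = (fun _ => ⊤) ∨ j ≤ rkN V (hnF Θ V j) := by
    intro j
    induction j with
    | zero => exact Or.inr (Nat.zero_le _)
    | succ j ih =>
      by_cases h : hnF Θ V j = (fun _ => ⊤)
      · exact Or.inl (hnF_succ_top Θ h)
      · rcases ih with h' | h'
        · exact absurd h' h
        · obtain ⟨h1, h2⟩ := hnF_lt_succ Θ h
          exact Or.inr (Nat.succ_le_of_lt (lt_of_le_of_lt h' (rkN_strict h1 h2)))
  rcases key (rkN V (fun _ => ⊤) + 1) with h | h
  · exact ⟨_, h⟩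
  · exfalso
    have : rkN V (hnF Θ V (rkN V (fun _ => ⊤) + 1)) ≤ rkN V (fun _ => ⊤) :=
      rkN_mono (fun i => le_top)
    omega

end HNAux

namespace HNAux

open Module

variable {k : Type*} [Field k] {Q0 Q1 : Type*} {s t : Q1 → Q0} [Fintype Q0]
variable (Θ : Q0 → ℚ) (V : QRep k Q0 Q1 s t)

open Classical in
noncomputable def hnN : ℕ := Nat.find (hnF_exists_top Θ (V := V))

open Classical in
lemma hnN_top : hnF Θ V (hnN Θ V) = (fun _ => ⊤) := Nat.find_spec (hnF_exists_top Θ (V := V))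

open Classical in
lemma hnN_min : ∀ j < hnN Θ V, hnF Θ V j ≠ (fun _ => ⊤) :=
  fun j hj => Nat.find_min (hnF_exists_top Θ (V := V)) hj

lemma hnF_top_of_ge : ∀ j, hnN Θ V ≤ j → hnF Θ V j = (fun _ => ⊤) := by
  intro j hj
  induction j with
  | zero => exact Nat.le_zero.mp hj ▸ hnN_top Θ V
  | succ j ih =>
    rcases Nat.lt_or_ge (hnN Θ V) (j + 1) with h | h
    · exact hnF_succ_top Θ (ih (Nat.lt_succ_iff.mp h))
    · exact le_antisymm hj h ▸ hnN_top Θ V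

lemma hnF_isHN : IsHNFiltration s t Θ V (hnN Θ V) (hnF Θ V) := by
  refine ⟨rfl, hnF_top_of_ge Θ V, hnF_subrep Θ, ?_, ?_, ?_⟩
  · intro j hj
    obtain ⟨h1, h2⟩ := hnF_lt_succ Θ (hnN_min Θ V j hj)
    exact ⟨fun i => h1 i, h2⟩
  · intro j hj U hUs hle1 hle2 hne
    have htop := hnN_min Θ V j hj
    rw [qSlope_eq, qSlope_eq, hnF_succ_of_ne Θ htop]
    obtain ⟨_, _, _, hmax, _⟩ := step_spec Θ (hnF_subrep Θ j) htop
    exact hmax U hUs (fun i => hle1 i) (fun h => hne h.symm)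
  · intro j hj
    have htop1 := hnN_min Θ V j (by omega)
    have htop2 := hnN_min Θ V (j + 1) hj
    rw [qSlope_eq, qSlope_eq, hnF_succ_of_ne Θ htop1]
    obtain ⟨hle, hne⟩ := hnF_lt_succ Θ htop2
    rw [hnF_succ_of_ne Θ htop1] at hle hne htop2
    have := step_strict Θ (hnF_subrep Θ j) htop1 (V := V)
      (W := hnF Θ V (j + 2)) ?_ ?_ ?_
    · exact this
    · exact hnF_subrep Θ (j + 2)
    · exact hle
    · exact hne

end HNAux

namespace HNAux

open Module

variable {k : Type*} [Field k] {Q0 Q1 : Type*} {s t : Q1 → Q0} [Fintype Q0]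
variable (Θ : Q0 → ℚ) {V : QRep k Q0 Q1 s t}

section HNprops

variable {m : ℕ} {G : ℕ → ∀ i, Submodule k (V.carrier i)}
variable (hG : IsHNFiltration s t Θ V m G)

include hG

lemma hn_le_succ (j : ℕ) : G j ≤ G (j + 1) := by
  obtain ⟨-, hGtop, -, hGchain, -, -⟩ := hG
  rcases Nat.lt_or_ge j m with h | h
  · exact fun i => (hGchain j h).1 i
  · rw [hGtop j h, hGtop (j + 1) (by omega)]

lemma hn_mono {a b : ℕ} (hab : a ≤ b) : G a ≤ G b := by
  induction b, hab using Nat.le_induction with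
  | base => exact le_refl _
  | succ b _ ih => exact le_trans ih (hn_le_succ Θ hG b)

lemma hn_ne_top {j : ℕ} (hj : j < m) : G j ≠ (fun _ => ⊤) := by
  obtain ⟨-, -, -, hGchain, -, -⟩ := hG
  intro h
  refine (hGchain j hj).2 (funext fun i => le_antisymm ((hGchain j hj).1 i) ?_)
  have h1 : G j i = ⊤ := congrFun h i
  rw [h1]; exact le_top

lemma hn_dec {a b : ℕ} (hab : a < b) (hbm : b < m) :
    mu Θ V (G b) (G (b + 1)) < mu Θ V (G a) (G (a + 1)) := by
  obtain ⟨-, -, -, -, -, hGdec⟩ := hG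
  have hdec : ∀ j, j + 1 < m →
      mu Θ V (G (j + 1)) (G (j + 2)) < mu Θ V (G j) (G (j + 1)) := by
    intro j h
    have := hGdec j h
    rwa [qSlope_eq, qSlope_eq] at this
  induction b, hab using Nat.le_induction with
  | base => exact hdec a hbm
  | succ b hab ih =>
    exact lt_trans (hdec b hbm) (ih (by omega))

/-- The key estimate: any subrepresentation `W` between `G j₀` and `G (j₀ + l)` has slope
(over `G j₀`) at most that of `G (j₀+1)`, strictly unless `W ≤ G (j₀+1)`. -/
lemma hn_key {j₀ : ℕ} (hj0 : j₀ < m) :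
    ∀ l, ∀ W, V.IsSubrep s t W → G j₀ ≤ W → W ≤ G (j₀ + l) →
      (dg Θ V W - dg Θ V (G j₀) ≤
        mu Θ V (G j₀) (G (j₀ + 1)) * (rk V W - rk V (G j₀))) ∧
      (¬ W ≤ G (j₀ + 1) → dg Θ V W - dg Θ V (G j₀) <
        mu Θ V (G j₀) (G (j₀ + 1)) * (rk V W - rk V (G j₀))) := by
  intro l
  induction l with
  | zero =>
    intro W hWs hleW hWle
    have hWeq : W = G j₀ := le_antisymm hWle hleW
    subst hWeq
    refine ⟨by simp, fun hcon => absurd (hn_le_succ Θ hG j₀) hcon⟩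
  | succ l ih =>
    intro W hWs hleW hWle
    by_cases hW : W ≤ G (j₀ + l)
    · exact ih W hWs hleW hW
    · have hlm : j₀ + l < m := by
        by_contra h
        push_neg at h
        obtain ⟨-, hGtop, -, -, -, -⟩ := id hG
        exact hW (by rw [hGtop _ h]; intro i; exact le_top)
      obtain ⟨-, -, hGsub, -, hGss, -⟩ := id hG
      cases l with
      | zero =>
        have hne : G j₀ ≠ W := fun h => hW (le_of_eq h.symm)
        have hss := hGss j₀ hj0 W hWs (fun i => hleW i) (fun i => hWle i)
          (fun h => hW (le_of_eq h))
        rw [qSlope_eq, qSlope_eq] at hss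
        exact ⟨(mu_le_iff Θ hleW hne).mp hss, fun hcon => absurd hWle hcon⟩
      | succ l' =>
        set μ₁ := mu Θ V (G j₀) (G (j₀ + 1)) with hμ₁
        have hCsub := hGsub (j₀ + (l' + 1))
        have hW's : V.IsSubrep s t (W ⊓ G (j₀ + (l' + 1))) := isSubrep_inf hWs hCsub
        have hleW' : G j₀ ≤ W ⊓ G (j₀ + (l' + 1)) :=
          le_inf hleW (hn_mono Θ hG (Nat.le_add_right _ _))
        have ihW' := (ih _ hW's hleW' inf_le_right).1
        -- the sup
        have hZle : W ⊔ G (j₀ + (l' + 1)) ≤ G (j₀ + (l' + 1) + 1) :=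
          sup_le hWle (hn_le_succ Θ hG _)
        have hZne : G (j₀ + (l' + 1)) ≠ W ⊔ G (j₀ + (l' + 1)) := by
          intro h
          exact hW (h ▸ le_sup_left)
        have hss := hGss (j₀ + (l' + 1)) hlm (W ⊔ G (j₀ + (l' + 1)))
          (isSubrep_sup hWs hCsub) (fun i => le_sup_right) (fun i => hZle i)
          (fun h => hZne h.symm)
        rw [qSlope_eq, qSlope_eq] at hss
        have h6 : dg Θ V (W ⊔ G (j₀ + (l' + 1))) - dg Θ V (G (j₀ + (l' + 1))) ≤
            mu Θ V (G (j₀ + (l' + 1))) (G (j₀ + (l' + 1) + 1)) *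
              (rk V (W ⊔ G (j₀ + (l' + 1))) - rk V (G (j₀ + (l' + 1)))) :=
          (mu_le_iff Θ le_sup_right hZne).mp hss
        have hmul : mu Θ V (G (j₀ + (l' + 1))) (G (j₀ + (l' + 1) + 1)) < μ₁ :=
          hn_dec Θ hG (by omega) hlm
        have hrpos : 0 < rk V (W ⊔ G (j₀ + (l' + 1))) - rk V (G (j₀ + (l' + 1))) :=
          rk_sub_pos le_sup_right hZne
        have h7 : dg Θ V (W ⊔ G (j₀ + (l' + 1))) - dg Θ V (G (j₀ + (l' + 1))) <
            μ₁ * (rk V (W ⊔ G (j₀ + (l' + 1))) - rk V (G (j₀ + (l' + 1)))) :=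
          lt_of_le_of_lt h6 (mul_lt_mul_of_pos_right hmul hrpos)
        have hmd := dg_modular Θ W (G (j₀ + (l' + 1)))
        have hmr := rk_modular (V := V) W (G (j₀ + (l' + 1)))
        have hid : μ₁ * (rk V W - rk V (G j₀)) =
            μ₁ * (rk V (W ⊓ G (j₀ + (l' + 1))) - rk V (G j₀)) +
            μ₁ * (rk V (W ⊔ G (j₀ + (l' + 1))) - rk V (G (j₀ + (l' + 1)))) := by
          have : rk V W - rk V (G j₀) = (rk V (W ⊓ G (j₀ + (l' + 1))) - rk V (G j₀)) +
              (rk V (W ⊔ G (j₀ + (l' + 1))) - rk V (G (j₀ + (l' + 1)))) := by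
            linarith only [hmr]
          rw [this]; ring
        have hstrict : dg Θ V W - dg Θ V (G j₀) < μ₁ * (rk V W - rk V (G j₀)) := by
          linarith only [ihW', h7, hid, hmd]
        exact ⟨le_of_lt hstrict, fun _ => hstrict⟩

/-- In any HN filtration, each step is the canonical maximal destabilizer. -/
lemma hn_step_eq {j₀ : ℕ} (hj0 : j₀ < m) : G (j₀ + 1) = step Θ V (G j₀) := by
  have hGsub := hG.2.2.1
  have hGchain := hG.2.2.2.1
  have hAtop : G j₀ ≠ (fun _ => ⊤) := hn_ne_top Θ hG hj0
  obtain ⟨hUs, hUle, hUne, hmax, heq⟩ := step_spec Θ (hGsub j₀) hAtop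
  set U := step Θ V (G j₀) with hUdef
  set μ₁ := mu Θ V (G j₀) (G (j₀ + 1)) with hμ₁
  have hchain := hGchain j₀ hj0
  have hAle1 : G j₀ ≤ G (j₀ + 1) := fun i => hchain.1 i
  have hAne1 : G j₀ ≠ G (j₀ + 1) := hchain.2
  have hUtop : U ≤ G (j₀ + m) := by
    have : G (j₀ + m) = (fun _ => ⊤) := hG.2.1 _ (Nat.le_add_left _ _)
    rw [this]; intro i; exact le_top
  obtain ⟨h1, h2⟩ := hn_key Θ hG hj0 m U hUs hUle hUtop
  have hμle : μ₁ ≤ mu Θ V (G j₀) U := hmax _ (hGsub (j₀ + 1)) hAle1 hAne1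
  have hUle1 : U ≤ G (j₀ + 1) := by
    by_contra hcon
    have hs := h2 hcon
    have hthis : μ₁ * (rk V U - rk V (G j₀)) ≤ dg Θ V U - dg Θ V (G j₀) :=
      (le_mu_iff Θ hUle hUne).mp hμle
    exact absurd hs (not_lt.mpr hthis)
  have hμeq : mu Θ V (G j₀) U = μ₁ :=
    le_antisymm ((mu_le_iff Θ hUle hUne).mpr h1) hμle
  have hGle : G (j₀ + 1) ≤ U := heq _ (hGsub (j₀ + 1)) hAle1 hAne1 (le_of_eq hμeq)
  exact le_antisymm hGle hUle1

lemma hn_eq_hnF : ∀ j, G j = hnF Θ V j := by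
  intro j
  induction j with
  | zero => rw [hG.1]; rfl
  | succ j ih =>
    by_cases h : G j = (fun _ => ⊤)
    · have hjm : m ≤ j := by
        by_contra hc
        exact hn_ne_top Θ hG (by omega) h
      rw [hG.2.1 (j + 1) (by omega), hnF_succ_top Θ (ih ▸ h)]
    · have hjm : j < m := by
        by_contra hc
        exact h (hG.2.1 j (by omega))
      rw [hn_step_eq Θ hG hjm, ih, hnF_succ_of_ne Θ (fun hc => h (ih ▸ hc))]

open Classical in
lemma hn_n_eq : m = hnN Θ V := by
  have hEq := hn_eq_hnF Θ hG
  have hmtop : hnF Θ V m = (fun _ => ⊤) := hEq m ▸ hG.2.1 m (le_refl m)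
  have h1 : hnN Θ V ≤ m := Nat.find_min' _ hmtop
  rcases Nat.lt_or_ge (hnN Θ V) m with h | h
  · exact absurd (hEq (hnN Θ V) ▸ hnN_top Θ V) (hn_ne_top Θ hG h)
  · omega

end HNprops

end HNAux

/-- Every finite-dimensional representation `V` of a finite quiver admits a unique
Harder–Narasimhan filtration `0 = V₀ ⊂ V₁ ⊂ … ⊂ Vₛ = V` with semistable subquotients
of strictly decreasing slopes. -/
theorem harder_narasimhan_exists_unique (Θ : Q0 → ℚ) (V : QRep k Q0 Q1 s t) :
    ∃! nF : ℕ × (ℕ → ∀ i, Submodule k (V.carrier i)),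
      IsHNFiltration s t Θ V nF.1 nF.2 := by
  refine ⟨(HNAux.hnN Θ V, HNAux.hnF Θ V), HNAux.hnF_isHN Θ V, ?_⟩
  rintro ⟨m, G⟩ hG
  have h1 : m = HNAux.hnN Θ V := HNAux.hn_n_eq Θ hG
  have h2 : G = HNAux.hnF Θ V := funext (HNAux.hn_eq_hnF Θ hG)
  simp only [Prod.mk.injEq]
  exact ⟨h1, h2⟩
end
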